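/- In the exact (5,2) nim there is no move from a position x (in nondecreasing order) with balanced reduced matrix to a position y (in nondecreasing order) with balanced reduced matrix. (Combining the cases: neither a move leaving the largest pile largest, nor a move that changes which pile is the leader, can go from *P to *P.) -/

import Mathlib

/-- The `j`-th binary digit of `m`. -/
def digit (m j : ℕ) : ℕ := m / 2 ^ j % 2

/-- The `j`-th column sum of the Bouton matrix of a position. -/
def colSum {n : ℕ} (x : Fin n → ℕ) (j : ℕ) : ℕ := ∑ i, digit (x i) j

/-- A move of classical nim: strictly reduce exactly one pile. -/
def NimMove {n : ℕ} (x y : Fin n → ℕ) : Prop :=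
  ∃ i, y i < x i ∧ ∀ j, j ≠ i → y j = x j

/-- A move of Moore's nim(n, ≤k): strictly reduce at least one and at most `k` piles. -/
def MooreMove (k : ℕ) {n : ℕ} (x y : Fin n → ℕ) : Prop :=
  ∃ S : Finset (Fin n), S.Nonempty ∧ S.card ≤ k ∧ (∀ i ∈ S, y i < x i) ∧ ∀ i ∉ S, y i = x i

/-- A move of exact (n, k) nim: strictly reduce exactly `k` piles. -/
def ExactMove (k : ℕ) {n : ℕ} (x y : Fin n → ℕ) : Prop :=
  ∃ S : Finset (Fin n), S.card = k ∧ (∀ i ∈ S, y i < x i) ∧ ∀ i ∉ S, y i = x i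

/-- N-positions of an impartial game: there is a move to a position all of whose
moves lead to N-positions (i.e. a move to a P-position). -/
inductive NPos {α : Type*} (Move : α → α → Prop) : α → Prop where
  | intro {x y : α} (h : Move x y) (hy : ∀ z, Move y z → NPos Move z) : NPos Move x

/-- P-positions of an impartial game: every move leads to an N-position
(in particular, terminal positions are P-positions). -/
def PPos {α : Type*} (Move : α → α → Prop) (x : α) : Prop :=
  ∀ y, Move x y → NPos Move y

lemma digit_le_one (m j : ℕ) : digit m j ≤ 1 := by
  have := Nat.mod_lt (m / 2^j) (show 0 < 2 by norm_num); unfold digit; omega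

lemma digit_testBit (m j : ℕ) : digit m j = (Nat.testBit m j).toNat := by
  rw [Nat.testBit_eq_decide_div_mod_eq]
  rcases Nat.mod_two_eq_zero_or_one (m / 2^j) with h | h <;> simp [digit, h]

lemma highdiff {m n : ℕ} (h : m < n) :
    ∃ j, digit m j = 0 ∧ digit n j = 1 ∧ ∀ k, j < k → digit m k = digit n k := by
  have hd : m ^^^ n ≠ 0 := by
    intro h0
    exact absurd (xor_eq_zero_iff.mp h0) (Nat.ne_of_lt h)
  set L := (m ^^^ n).log2 with hL
  have h1 : 2 ^ L ≤ m ^^^ n := Nat.log2_self_le hd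
  have h2 : m ^^^ n < 2 ^ (L + 1) := Nat.lt_log2_self
  have hbit : (m ^^^ n).testBit L = true := by
    rw [Nat.testBit_eq_decide_div_mod_eq]
    have hdiv : (m ^^^ n) / 2 ^ L = 1 := by
      apply Nat.div_eq_of_lt_le <;> rw [Nat.pow_succ] at * <;> omega
    simp [hdiv]
  have hhigh : ∀ k, L < k → digit m k = digit n k := by
    intro k hk
    have hk2 : 2 ^ (L+1) ≤ 2 ^ k := Nat.pow_le_pow_right (by norm_num) hk
    have hz : (m ^^^ n).testBit k = false := by
      rw [Nat.testBit_eq_decide_div_mod_eq]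
      have : (m ^^^ n) / 2 ^ k = 0 := Nat.div_eq_of_lt (by omega)
      simp [this]
    rw [Nat.testBit_xor] at hz
    rw [digit_testBit, digit_testBit]
    cases hm : m.testBit k <;> cases hn : n.testBit k <;> simp_all
  have hne : m.testBit L ≠ n.testBit L := by
    intro heq
    rw [Nat.testBit_xor, heq] at hbit
    simp at hbit
  have hmL : m.testBit L = false ∧ n.testBit L = true := by
    cases hm : m.testBit L <;> cases hn : n.testBit L <;> simp_all
    have : n < m := Nat.lt_of_testBit L hn hm (fun j hj => by
      have := hhigh j hj
      rw [digit_testBit, digit_testBit] at this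
      cases h1 : m.testBit j <;> cases h2 : n.testBit j <;> simp_all)
    omega
  exact ⟨L, by rw [digit_testBit, hmL.1]; rfl, by rw [digit_testBit, hmL.2]; rfl, hhigh⟩

lemma moore_key {n : ℕ} (u v : Fin n → ℕ) (A T : Finset (Fin n)) (hT : T ⊆ A)
    (hne : T.Nonempty) (hcard : T.card ≤ 2)
    (hdec : ∀ i ∈ T, v i < u i) (heq : ∀ i ∈ A, i ∉ T → v i = u i)
    (hu : ∀ j, (∑ i ∈ A, digit (u i) j) % 3 = 0) :
    ¬ ∀ j, (∑ i ∈ A, digit (v i) j) % 3 = 0 := by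
  intro hv
  interval_cases hc : T.card
  · exact absurd (Finset.card_eq_zero.mp hc) (Finset.nonempty_iff_ne_empty.mp hne)
  · obtain ⟨i, hi⟩ := Finset.card_eq_one.mp hc
    subst hi
    obtain ⟨J, hm0, hm1, _⟩ := highdiff (hdec i (by simp))
    have hiA : i ∈ A := hT (by simp)
    have h1 : digit (u i) J + ∑ s ∈ A.erase i, digit (u s) J = ∑ s ∈ A, digit (u s) J := by
      simpa using Finset.add_sum_erase A (fun s => digit (u s) J) hiA
    have h2 : digit (v i) J + ∑ s ∈ A.erase i, digit (v s) J = ∑ s ∈ A, digit (v s) J := by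
      simpa using Finset.add_sum_erase A (fun s => digit (v s) J) hiA
    have h3 : ∑ s ∈ A.erase i, digit (u s) J = ∑ s ∈ A.erase i, digit (v s) J := by
      apply Finset.sum_congr rfl
      intro s hs
      rw [heq s (Finset.mem_of_mem_erase hs) (by simp [Finset.ne_of_mem_erase hs])]
    have := hu J; have := hv J
    omega
  · obtain ⟨i0, k0, hik0, hT2⟩ := Finset.card_eq_two.mp hc
    subst hT2
    obtain ⟨Ji0, p1, p2, p3⟩ := highdiff (hdec i0 (by simp))
    obtain ⟨Jk0, q1, q2, q3⟩ := highdiff (hdec k0 (by simp))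
    have main : ∀ (i k : Fin n) (Ji Jk : ℕ), i ≠ k → i ∈ A → k ∈ A →
        digit (v i) Ji = 0 → digit (u i) Ji = 1 →
        digit (v k) Jk = 0 → digit (u k) Jk = 1 →
        (∀ m, Jk < m → digit (v k) m = digit (u k) m) →
        ({i, k} : Finset (Fin n)) = {i0, k0} → Jk ≤ Ji → False := by
      intro i k Ji Jk hik hiA hkA hi0 hi1 hk0 hk1 hkhi hTeq hle
      have hkA' : k ∈ A.erase i := Finset.mem_erase.mpr ⟨fun h => hik h.symm, hkA⟩
      have h1 : digit (u i) Ji + ∑ s ∈ A.erase i, digit (u s) Ji = ∑ s ∈ A, digit (u s) Ji := by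
        simpa using Finset.add_sum_erase A (fun s => digit (u s) Ji) hiA
      have h2 : digit (v i) Ji + ∑ s ∈ A.erase i, digit (v s) Ji = ∑ s ∈ A, digit (v s) Ji := by
        simpa using Finset.add_sum_erase A (fun s => digit (v s) Ji) hiA
      have h1' : digit (u k) Ji + ∑ s ∈ (A.erase i).erase k, digit (u s) Ji
          = ∑ s ∈ A.erase i, digit (u s) Ji := by
        simpa using Finset.add_sum_erase (A.erase i) (fun s => digit (u s) Ji) hkA'
      have h2' : digit (v k) Ji + ∑ s ∈ (A.erase i).erase k, digit (v s) Ji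
          = ∑ s ∈ A.erase i, digit (v s) Ji := by
        simpa using Finset.add_sum_erase (A.erase i) (fun s => digit (v s) Ji) hkA'
      have h3 : ∑ s ∈ (A.erase i).erase k, digit (u s) Ji
          = ∑ s ∈ (A.erase i).erase k, digit (v s) Ji := by
        apply Finset.sum_congr rfl
        intro s hs
        have hs1 := Finset.ne_of_mem_erase hs
        have hs2 := Finset.ne_of_mem_erase (Finset.mem_of_mem_erase hs)
        rw [heq s (Finset.mem_of_mem_erase (Finset.mem_of_mem_erase hs))
          (by rw [← hTeq]; simp [hs1, hs2])]
      have hu' := hu Ji; have hv' := hv Ji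
      rcases eq_or_lt_of_le hle with he | hlt
      · have e0 : digit (v k) Ji = 0 := he ▸ hk0
        have e1 : digit (u k) Ji = 1 := he ▸ hk1
        omega
      · have e2 : digit (v k) Ji = digit (u k) Ji := hkhi Ji hlt
        omega
    have hiA : i0 ∈ A := hT (by simp)
    have hkA : k0 ∈ A := hT (by simp)
    rcases le_total Jk0 Ji0 with hle | hle
    · exact main i0 k0 Ji0 Jk0 hik0 hiA hkA p1 p2 q1 q2 q3 rfl hle
    · exact main k0 i0 Jk0 Ji0 (Ne.symm hik0) hkA hiA q1 q2 p1 p2 p3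
        (Finset.pair_comm k0 i0) hle

/-- in exact (5,2) nim there is no move from a sorted position with
balanced reduced matrix to a position whose sorted version also has balanced
reduced matrix. -/
theorem exact52_no_P_to_P (x y : Fin 5 → ℕ) (hx : Monotone x)
    (hbx : ∀ j, colSum (fun i : Fin 4 => x i.castSucc) j % 3 = 0)
    (hmv : ExactMove 2 x y) (σ : Equiv.Perm (Fin 5)) (hyσ : Monotone (y ∘ σ)) :
    ¬ ∀ j, colSum (fun i : Fin 4 => (y ∘ σ) i.castSucc) j % 3 = 0 := by
  obtain ⟨S, hScard, hSdec, hSeq⟩ := hmv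
  have h45 : (Fin.last 4 : Fin 5) = 4 := rfl
  set t : Fin 5 := σ 4 with ht
  set e : Equiv.Perm (Fin 5) := Equiv.swap 4 t with he
  set w : Fin 5 → ℕ := fun s => y (e s) with hw
  have hymax : ∀ s, y s ≤ y t := by
    intro s
    have := hyσ (Fin.le_last (σ.symm s))
    simpa [h45] using this
  have hxmax : ∀ s, x s ≤ x 4 := fun s => by
    have := hx (Fin.le_last s); rwa [h45] at this
  have hyle : ∀ s, y s ≤ x s := by
    intro s
    by_cases h : s ∈ S
    · exact le_of_lt (hSdec s h)
    · exact le_of_eq (hSeq s h)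
  have hw4 : w 4 = y t := by simp [hw, he, Equiv.swap_apply_left]
  have hwt : t ≠ 4 → w t = y 4 := by
    intro h; simp [hw, he, Equiv.swap_apply_right]
  have hwother : ∀ s, s ≠ 4 → s ≠ t → w s = y s := by
    intro s h1 h2; simp [hw, he, Equiv.swap_apply_of_ne_of_ne h1 h2]
  -- pointwise bound
  have hle : ∀ s : Fin 5, s ≠ 4 → w s ≤ x s := by
    intro s hs
    by_cases hst : s = t
    · rw [hst] at hs ⊢
      rw [hwt hs]
      exact le_trans (hymax 4) (hyle t)
    · rw [hwother s hs hst]; exact hyle s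
  set A : Finset (Fin 5) := Finset.univ.erase 4 with hA
  set T : Finset (Fin 5) := A.filter (fun s => w s < x s) with hTdef
  have hTA : T ⊆ A := Finset.filter_subset _ _
  have hmemT : ∀ s, s ∈ T ↔ (s ≠ 4 ∧ w s < x s) := by
    intro s; simp [hTdef, hA]
  -- nonempty
  obtain ⟨a, b, hab, hSab⟩ := Finset.card_eq_two.mp hScard
  have hne : T.Nonempty := by
    by_cases hex : ∃ s ∈ S, s ≠ 4 ∧ s ≠ t
    · obtain ⟨s, hsS, hs4, hst⟩ := hex
      exact ⟨s, (hmemT s).mpr ⟨hs4, by rw [hwother s hs4 hst]; exact hSdec s hsS⟩⟩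
    · push_neg at hex
      -- then S ⊆ {4, t}, so S = {4, t}, t ∈ S, t ≠ 4
      have ha := hex a (by rw [hSab]; simp)
      have hb := hex b (by rw [hSab]; simp)
      have htS : t ∈ S ∧ t ≠ 4 := by
        rcases Decidable.em (a = 4) with h | h
        · have hb4 : b ≠ 4 := fun hc => hab (h.trans hc.symm)
          have := hb hb4
          subst this
          exact ⟨by rw [hSab]; simp, hb4⟩
        · have := ha h
          subst this
          exact ⟨by rw [hSab]; simp, h⟩
      refine ⟨t, (hmemT t).mpr ⟨htS.2, ?_⟩⟩
      rw [hwt htS.2]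
      calc y 4 ≤ y t := hymax 4
        _ < x t := hSdec t htS.1
  -- card bound
  have hcard : T.card ≤ 2 := by
    by_cases h4S : (4 : Fin 5) ∈ S
    · have hsub : T ⊆ insert t (S.erase 4) := by
        intro s hs
        obtain ⟨hs4, hslt⟩ := (hmemT s).mp hs
        by_cases hst : s = t
        · simp [hst]
        · rw [hwother s hs4 hst] at hslt
          have hsS : s ∈ S := by
            by_contra hc
            rw [hSeq s hc] at hslt; omega
          exact Finset.mem_insert_of_mem (Finset.mem_erase.mpr ⟨hs4, hsS⟩)
      calc T.card ≤ (insert t (S.erase 4)).card := Finset.card_le_card hsub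
        _ ≤ (S.erase 4).card + 1 := Finset.card_insert_le _ _
        _ = (S.card - 1) + 1 := by rw [Finset.card_erase_of_mem h4S]
        _ ≤ 2 := by omega
    · have hy4 : y 4 = x 4 := hSeq 4 h4S
      have htT : t ∉ T := by
        intro hc
        obtain ⟨ht4, hlt⟩ := (hmemT t).mp hc
        rw [hwt ht4, hy4] at hlt
        exact absurd (hxmax t) (by omega)
      have hsub : T ⊆ S := by
        intro s hs
        obtain ⟨hs4, hslt⟩ := (hmemT s).mp hs
        have hst : s ≠ t := fun hc => htT (hc ▸ hs)
        rw [hwother s hs4 hst] at hslt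
        by_contra hc
        rw [hSeq s hc] at hslt; omega
      calc T.card ≤ S.card := Finset.card_le_card hsub
        _ ≤ 2 := by omega
  -- sum identities
  have hsum_x : ∀ j, colSum (fun i : Fin 4 => x i.castSucc) j = ∑ s ∈ A, digit (x s) j := by
    intro j
    have h1 : ∑ i : Fin 5, digit (x i) j
        = ∑ i : Fin 4, digit (x i.castSucc) j + digit (x (Fin.last 4)) j :=
      Fin.sum_univ_castSucc (fun i => digit (x i) j)
    have h2 : digit (x 4) j + ∑ s ∈ A, digit (x s) j = ∑ i : Fin 5, digit (x i) j := by
      simpa using Finset.add_sum_erase Finset.univ (fun s => digit (x s) j)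
        (Finset.mem_univ (4 : Fin 5))
    rw [h45] at h1
    have h0 : colSum (fun i : Fin 4 => x i.castSucc) j
        = ∑ i : Fin 4, digit (x i.castSucc) j := rfl
    omega
  have hsum_y : ∀ j, colSum (fun i : Fin 4 => (y ∘ σ) i.castSucc) j
      = ∑ s ∈ A, digit (w s) j := by
    intro j
    have h1 : ∑ i : Fin 5, digit (y (σ i)) j
        = ∑ i : Fin 4, digit (y (σ i.castSucc)) j + digit (y (σ (Fin.last 4))) j :=
      Fin.sum_univ_castSucc (fun i => digit (y (σ i)) j)
    have h2 : ∑ i : Fin 5, digit (y (σ i)) j = ∑ s : Fin 5, digit (y s) j :=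
      Equiv.sum_comp σ (fun s => digit (y s) j)
    have h3 : digit (y t) j + ∑ s ∈ Finset.univ.erase t, digit (y s) j
        = ∑ s : Fin 5, digit (y s) j := by
      simpa using Finset.add_sum_erase Finset.univ (fun s => digit (y s) j)
        (Finset.mem_univ t)
    have h4 : ∑ s ∈ A, digit (w s) j = ∑ s ∈ Finset.univ.erase t, digit (y s) j := by
      refine Finset.sum_equiv e ?_ ?_
      · intro i
        constructor
        · intro hi
          have hi4 : i ≠ 4 := by simpa [hA] using hi
          have : e i ≠ t := by
            rw [show t = e 4 from (Equiv.swap_apply_left 4 t).symm]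
            exact fun hc => hi4 (e.injective hc)
          simpa using this
        · intro hi
          have hit : e i ≠ t := by simpa using hi
          have : i ≠ 4 := fun hc => hit (by rw [hc]; exact Equiv.swap_apply_left 4 t)
          simpa [hA] using this
      · intro i _; rfl
    rw [h45, ← ht] at h1
    have h0 : colSum (fun i : Fin 4 => (y ∘ σ) i.castSucc) j
        = ∑ i : Fin 4, digit (y (σ i.castSucc)) j := rfl
    omega
  intro hcon
  refine moore_key x w A T hTA hne hcard ?_ ?_ ?_ ?_
  · intro i hi; exact ((hmemT i).mp hi).2
  · intro i hiA hiT
    have hi4 : i ≠ 4 := by simpa [hA] using hiA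
    have h1 := hle i hi4
    have h2 : ¬ w i < x i := fun hc => hiT ((hmemT i).mpr ⟨hi4, hc⟩)
    omega
  · intro j; rw [← hsum_x]; exact hbx j
  · intro j; rw [← hsum_y]; exact hcon j
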